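/- Let A ∈ M_ℝ(d_1×d_2; l_1,…,l_r) have a singular value decomposition A = P_L D P_Rᵀ with P_L a d_1×d_1 orthogonal matrix, P_R a d_2×d_2 orthogonal matrix and D a d_1×d_2 diagonal matrix, and assume 0 is not an eigenvalue of A Aᵀ and A Aᵀ has exactly l distinct eigenvalues. Then for every ε > 0 there exists δ > 0 such that every B ∈ M_ℝ(d_1×d_2; l_1,…,l_r) with max_{i,j} |A_{i,j} − B_{i,j}| < δ satisfies: 0 is not an eigenvalue of B Bᵀ, B Bᵀ has exactly l distinct eigenvalues, and B admits a singular value decomposition B = Q_L F Q_Rᵀ with Q_L orthogonal d_1×d_1, Q_R orthogonal d_2×d_2 and F diagonal d_1×d_2 satisfying max_{1≤i≤d_1} |D_{i,i} − F_{i,i}| < ε, max_{1≤i,j≤d_1} |(Q_L)_{i,j} − (P_L)_{i,j}| < ε, and max_{1≤i,j≤d_2} |(Q_R)_{i,j} − (P_R)_{i,j}| < ε. -/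

import Mathlib

open Matrix Finset Filter

noncomputable section

/-- `hasCollision ll μ` : there are pairwise disjoint index sets `J 1, …, J r` with
`|J j| = l j` on which the values of `μ` coincide. -/
def hasCollision {d r : ℕ} (ll : Fin r → ℕ) (μ : Fin d → ℝ) : Prop :=
  ∃ J : Fin r → Finset (Fin d),
    (∀ j j' : Fin r, j ≠ j' → Disjoint (J j) (J j')) ∧
    (∀ j, (J j).card = ll j) ∧
    (∀ j : Fin r, ∀ i ∈ J j, ∀ i' ∈ J j, μ i = μ i')

/-- `M_ℝ(d₁ × d₂; l_1, …, l_r)` : real `d₁ × d₂` matrices having, for each `j`, `l_j`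
singular values (with multiplicity) which coincide, over pairwise disjoint index sets. -/
def RectRealCollide (d₁ d₂ r : ℕ) (ll : Fin r → ℕ) : Set (Matrix (Fin d₁) (Fin d₂) ℝ) :=
  {x | ∃ s : Fin d₁ → ℝ, (∀ i, 0 ≤ s i) ∧
    (∃ P : Matrix (Fin d₁) (Fin d₁) ℝ, P * Pᵀ = 1 ∧ Pᵀ * P = 1 ∧
      x * xᵀ = P * Matrix.diagonal (fun i => s i ^ 2) * Pᵀ) ∧
    hasCollision ll s}

/-! ### Auxiliary lemmas -/

lemma exists_orth_ext {d₁ d₂ : ℕ} (h : d₁ ≤ d₂) (R : Matrix (Fin d₂) (Fin d₁) ℝ)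
    (hR : Rᵀ * R = 1) :
    ∃ U : Matrix (Fin d₂) (Fin d₂) ℝ, Uᵀ * U = 1 ∧
      ∀ (k : Fin d₂) (i : Fin d₁), (k : ℕ) = (i : ℕ) → ∀ j, U j k = R j i := by
  classical
  set v : Fin d₂ → EuclideanSpace ℝ (Fin d₂) := fun k =>
    if h' : (k : ℕ) < d₁ then WithLp.toLp 2 (fun j => R j ⟨k, h'⟩) else 0 with hv
  set s : Set (Fin d₂) := {k | (k : ℕ) < d₁} with hs
  have horth : Orthonormal ℝ (s.restrict v) := by
    rw [orthonormal_iff_ite]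
    rintro ⟨k, hk⟩ ⟨k', hk'⟩
    have hk0 : (k : ℕ) < d₁ := hk
    have hk0' : (k' : ℕ) < d₁ := hk'
    simp only [Set.restrict_apply, hv, dif_pos hk0, dif_pos hk0']
    have := congrFun (congrFun hR ⟨k, hk0⟩) ⟨k', hk0'⟩
    rw [Matrix.mul_apply] at this
    simp only [Matrix.transpose_apply] at this
    rw [Finset.sum_congr rfl (fun j _ => mul_comm (R j ⟨k, hk0⟩) _)] at this
    rw [PiLp.inner_apply]
    simp only [RCLike.inner_apply, conj_trivial]
    change ∑ x, (if h : (k' : ℕ) < d₁ then WithLp.toLp 2 (fun j => R j ⟨k', h⟩)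
      else (0 : EuclideanSpace ℝ (Fin d₂))).ofLp x * (if h : (k : ℕ) < d₁ then
      WithLp.toLp 2 (fun j => R j ⟨k, h⟩) else (0 : EuclideanSpace ℝ (Fin d₂))).ofLp x = _
    rw [dif_pos hk0, dif_pos hk0']
    change ∑ x, R x ⟨k', hk0'⟩ * R x ⟨k, hk0⟩ = _
    rw [this]
    by_cases hkk : k = k'
    · subst hkk
      simp [Matrix.one_apply]
    · have h1 : (⟨(k:ℕ), hk0⟩ : Fin d₁) ≠ ⟨(k':ℕ), hk0'⟩ := by
        intro hc
        injection hc with hc'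
        exact hkk (Fin.ext hc')
      have h2 : (⟨k, hk⟩ : s) ≠ ⟨k', hk'⟩ := fun hc => hkk (congrArg Subtype.val hc)
      rw [Matrix.one_apply, if_neg h1, if_neg h2]
  obtain ⟨b, hb⟩ := horth.exists_orthonormalBasis_extension_of_card_eq
    (by simp [finrank_euclideanSpace])
  refine ⟨Matrix.of fun j k => b k j, ?_, ?_⟩
  · ext k k'
    rw [Matrix.mul_apply, Matrix.one_apply]
    have := b.orthonormal
    rw [orthonormal_iff_ite] at this
    have h2 := this k k'
    rw [PiLp.inner_apply] at h2
    simp only [RCLike.inner_apply, conj_trivial] at h2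
    simp only [Matrix.transpose_apply, Matrix.of_apply]
    rw [← h2]
    exact Finset.sum_congr rfl (fun _ _ => mul_comm _ _)
  · intro k i hki j
    have hk0 : (k : ℕ) < d₁ := hki ▸ i.isLt
    have hbk : b k = v k := hb k hk0
    show b k j = R j i
    rw [hbk, hv]
    simp only [dif_pos hk0]
    show R j ⟨(k:ℕ), hk0⟩ = R j i
    congr 1
    exact Fin.ext hki

lemma spectrum_conj_diag {d : ℕ} (Q : Matrix (Fin d) (Fin d) ℝ)
    (h1 : Q * Qᵀ = 1) (h2 : Qᵀ * Q = 1) (v : Fin d → ℝ) :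
    spectrum ℝ (Q * Matrix.diagonal v * Qᵀ) = Set.range v := by
  classical
  have hQ : IsUnit Q := ⟨⟨Q, Qᵀ, h1, h2⟩, rfl⟩
  have hQT : IsUnit Qᵀ := ⟨⟨Qᵀ, Q, h2, h1⟩, rfl⟩
  ext x
  rw [spectrum.mem_iff]
  have key : algebraMap ℝ (Matrix (Fin d) (Fin d) ℝ) x - Q * Matrix.diagonal v * Qᵀ
      = Q * Matrix.diagonal (fun i => x - v i) * Qᵀ := by
    have hd : Matrix.diagonal (fun i => x - v i)
        = x • (1 : Matrix (Fin d) (Fin d) ℝ) - Matrix.diagonal v := by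
      rw [Matrix.smul_one_eq_diagonal, ← Matrix.diagonal_sub]
    rw [hd, Matrix.mul_sub, Matrix.sub_mul]
    congr 1
    rw [Algebra.algebraMap_eq_smul_one, Matrix.mul_smul, Matrix.smul_mul, Matrix.mul_one, h1]
  have hunit : IsUnit (Q * Matrix.diagonal (fun i => x - v i) * Qᵀ)
      ↔ IsUnit (Matrix.diagonal (fun i => x - v i)) := by
    constructor
    · intro h
      have heq : Qᵀ * (Q * Matrix.diagonal (fun i => x - v i) * Qᵀ) * Q
          = Matrix.diagonal (fun i => x - v i) := by
        rw [show Qᵀ * (Q * Matrix.diagonal (fun i => x - v i) * Qᵀ) * Q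
            = (Qᵀ * Q) * Matrix.diagonal (fun i => x - v i) * (Qᵀ * Q) by noncomm_ring,
          h2, Matrix.one_mul, Matrix.mul_one]
      rw [← heq]
      exact ((hQT.mul h).mul hQ)
    · intro h
      exact (hQ.mul h).mul hQT
  rw [key, hunit, Matrix.isUnit_iff_isUnit_det, Matrix.det_diagonal, isUnit_iff_ne_zero, not_not,
    Finset.prod_eq_zero_iff]
  constructor
  · rintro ⟨i, _, hi⟩
    exact ⟨i, (sub_eq_zero.mp hi).symm⟩
  · rintro ⟨i, hi⟩
    exact ⟨i, Finset.mem_univ i, by rw [← hi, sub_self]⟩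

lemma collision_image_card {d r : ℕ} (ll : Fin r → ℕ) (hll : ∀ j, 1 ≤ ll j)
    {t : Fin d → ℝ} (h : hasCollision ll t) :
    (Finset.image t Finset.univ).card + ∑ j, (ll j - 1) ≤ d := by
  classical
  obtain ⟨J, hdisj, hcard, hconst⟩ := h
  have hne : ∀ j, (J j).Nonempty := fun j =>
    Finset.card_pos.mp (by rw [hcard j]; exact hll j)
  choose ρ hρ using hne
  set Bd : Finset (Fin d) := Finset.univ.biUnion (fun j => J j \ {ρ j}) with hBd
  have hcardB : Bd.card = ∑ j, (ll j - 1) := by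
    rw [hBd, Finset.card_biUnion]
    · refine Finset.sum_congr rfl fun j _ => ?_
      rw [Finset.card_sdiff_of_subset (Finset.singleton_subset_iff.mpr (hρ j)), hcard j,
        Finset.card_singleton]
    · intro j _ j' _ hjj'
      exact Finset.disjoint_of_subset_left (Finset.sdiff_subset)
        (Finset.disjoint_of_subset_right (Finset.sdiff_subset) (hdisj j j' hjj'))
  have hsub : Finset.image t Finset.univ ⊆ Finset.image t (Finset.univ \ Bd) := by
    intro v hv
    rw [Finset.mem_image] at hv ⊢
    obtain ⟨i, _, hi⟩ := hv
    by_cases hiB : i ∈ Bd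
    · rw [hBd, Finset.mem_biUnion] at hiB
      obtain ⟨j, _, hij⟩ := hiB
      rw [Finset.mem_sdiff] at hij
      refine ⟨ρ j, ?_, ?_⟩
      · rw [Finset.mem_sdiff]
        refine ⟨Finset.mem_univ _, ?_⟩
        rw [hBd, Finset.mem_biUnion]
        rintro ⟨j', _, hj'⟩
        rw [Finset.mem_sdiff, Finset.mem_singleton] at hj'
        by_cases hjj' : j = j'
        · exact hj'.2 (by rw [hjj'])
        · exact (Finset.disjoint_left.mp (hdisj j j' hjj') (hρ j)) hj'.1
      · rw [← hi]
        exact hconst j (ρ j) (hρ j) i hij.1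
    · exact ⟨i, Finset.mem_sdiff.mpr ⟨Finset.mem_univ _, hiB⟩, hi⟩
  have h1 : (Finset.image t Finset.univ).card ≤ (Finset.univ \ Bd).card :=
    le_trans (Finset.card_le_card hsub) (Finset.card_image_le)
  have h2 : (Finset.univ \ Bd).card = d - Bd.card := by
    rw [Finset.card_sdiff_of_subset (Finset.subset_univ _), Finset.card_univ, Fintype.card_fin]
  have h3 : Bd.card ≤ d := le_trans (Finset.card_le_card (Finset.subset_univ _))
    (by rw [Finset.card_univ, Fintype.card_fin])
  omega

lemma rigidity {d : ℕ} (i0 : Fin d) (f t : Fin d → ℝ) {L : ℕ}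
    (hf : (Finset.image f Finset.univ).card = L)
    (hsep : ∀ i i' : Fin d, f i ≠ f i' → t i ≠ t i')
    (hpig : (Finset.image t Finset.univ).card ≤ L) :
    (∀ i i' : Fin d, f i = f i' → t i = t i') ∧ (Finset.image t Finset.univ).card = L := by
  classical
  set wit : ℝ → Fin d := fun v => if h : ∃ i, f i = v then h.choose else i0 with hwitdef
  have hwit : ∀ v ∈ Finset.image f Finset.univ, f (wit v) = v := by
    intro v hv
    rw [Finset.mem_image] at hv
    obtain ⟨i, _, hi⟩ := hv
    have h : ∃ i, f i = v := ⟨i, hi⟩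
    simp only [hwitdef, dif_pos h]
    exact h.choose_spec
  have hmaps : ∀ v ∈ Finset.image f Finset.univ,
      t (wit v) ∈ Finset.image t Finset.univ := by
    intro v _; exact Finset.mem_image_of_mem t (Finset.mem_univ _)
  have hinj : Set.InjOn (fun v => t (wit v)) ↑(Finset.image f Finset.univ) := by
    intro v hv v' hv' hvv'
    by_contra hne
    have : f (wit v) ≠ f (wit v') := by
      rw [hwit v hv, hwit v' hv']; exact hne
    exact hsep _ _ this hvv'
  have hge : L ≤ (Finset.image t Finset.univ).card := by
    rw [← hf]
    exact Finset.card_le_card_of_injOn _ hmaps hinj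
  have hcardt : (Finset.image t Finset.univ).card = L := le_antisymm hpig hge
  refine ⟨?_, hcardt⟩
  intro i i' hfe
  by_contra hne
  set wit2 : ℝ → Fin d := fun v => if v = f i then i else wit v with hwit2def
  have hwit2 : ∀ v ∈ Finset.image f Finset.univ, f (wit2 v) = v := by
    intro v hv
    simp only [hwit2def]
    by_cases h : v = f i
    · rw [if_pos h, h]
    · rw [if_neg h]; exact hwit v hv
  have hinj2 : Set.InjOn (fun v => t (wit2 v)) ↑(Finset.image f Finset.univ) := by
    intro v hv v' hv' hvv'
    by_contra hne2
    have : f (wit2 v) ≠ f (wit2 v') := by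
      rw [hwit2 v hv, hwit2 v' hv']; exact hne2
    exact hsep _ _ this hvv'
  have hnotmem : t i' ∉ Finset.image (fun v => t (wit2 v)) (Finset.image f Finset.univ) := by
    rw [Finset.mem_image]
    rintro ⟨v, hv, hveq⟩
    by_cases h : v = f i
    · have : wit2 v = i := by simp only [hwit2def, if_pos h]
      rw [this] at hveq
      exact hne hveq
    · have hfv : f (wit2 v) = v := hwit2 v hv
      have : f (wit2 v) ≠ f i' := by rw [hfv, ← hfe]; exact h
      exact hsep _ _ this hveq
  have hsub : insert (t i') (Finset.image (fun v => t (wit2 v)) (Finset.image f Finset.univ))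
      ⊆ Finset.image t Finset.univ := by
    intro y hy
    rw [Finset.mem_insert] at hy
    rcases hy with hy | hy
    · rw [hy]; exact Finset.mem_image_of_mem t (Finset.mem_univ _)
    · rw [Finset.mem_image] at hy
      obtain ⟨v, _, hv⟩ := hy
      rw [← hv]; exact Finset.mem_image_of_mem t (Finset.mem_univ _)
  have hcard2 : (insert (t i') (Finset.image (fun v => t (wit2 v))
      (Finset.image f Finset.univ))).card = L + 1 := by
    rw [Finset.card_insert_of_notMem hnotmem, Finset.card_image_of_injOn hinj2, hf]
  have := Finset.card_le_card hsub
  rw [hcard2, hcardt] at this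
  omega

lemma sq_eq_of_nonneg {x y : ℝ} (hx : 0 ≤ x) (hy : 0 ≤ y) (h : x ^ 2 = y ^ 2) : x = y := by
  have h1 : (x - y) * (x + y) = 0 := by linear_combination h
  rcases mul_eq_zero.mp h1 with h2 | h2
  · linarith
  · linarith

lemma sq_injOn_nonneg {s : Finset ℝ} (hs : ∀ x ∈ s, 0 ≤ x) :
    Set.InjOn (fun x : ℝ => x ^ 2) ↑s := by
  intro x hx y hy hxy
  exact sq_eq_of_nonneg (hs x hx) (hs y hy) hxy

lemma range_eq_coe_image {d : ℕ} (g : Fin d → ℝ) :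
    Set.range g = ↑(Finset.image g Finset.univ) := by
  ext y; simp

lemma tendsto_abs_lt {x : ℕ → ℝ} {a ε : ℝ} (hx : Tendsto x atTop (nhds a)) (hε : 0 < ε) :
    ∀ᶠ k in atTop, |a - x k| < ε := by
  obtain ⟨N, hN⟩ := Metric.tendsto_atTop.mp hx ε hε
  filter_upwards [Filter.eventually_ge_atTop N] with k hk
  have := hN k hk
  rw [Real.dist_eq] at this
  rw [abs_sub_comm]; exact this

section tend

def MTendsto {a b : ℕ} (X : ℕ → Matrix (Fin a) (Fin b) ℝ) (L : Matrix (Fin a) (Fin b) ℝ) : Prop :=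
  ∀ i j, Tendsto (fun k => X k i j) atTop (nhds (L i j))

variable {l m n : ℕ}

lemma MTendsto.mul {X : ℕ → Matrix (Fin l) (Fin m) ℝ} {Y : ℕ → Matrix (Fin m) (Fin n) ℝ}
    {LX LY} (hX : MTendsto X LX) (hY : MTendsto Y LY) :
    MTendsto (fun k => X k * Y k) (LX * LY) := by
  intro i j
  simp only [Matrix.mul_apply]
  exact tendsto_finset_sum _ (fun c _ => (hX i c).mul (hY c j))

lemma MTendsto.transpose {X : ℕ → Matrix (Fin l) (Fin m) ℝ} {LX} (hX : MTendsto X LX) :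
    MTendsto (fun k => (X k)ᵀ) LXᵀ := fun i j => hX j i

lemma MTendsto.const (L : Matrix (Fin l) (Fin m) ℝ) : MTendsto (fun _ => L) L :=
  fun _ _ => tendsto_const_nhds

lemma MTendsto.unique {X : ℕ → Matrix (Fin l) (Fin m) ℝ} {L L'}
    (h : MTendsto X L) (h' : MTendsto X L') : L = L' := by
  ext i j; exact tendsto_nhds_unique (h i j) (h' i j)

lemma MTendsto.congr' {X Y : ℕ → Matrix (Fin l) (Fin m) ℝ} {L}
    (h : MTendsto X L) (hXY : ∀ᶠ k in atTop, X k = Y k) : MTendsto Y L := by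
  intro i j
  exact (h i j).congr' (hXY.mono fun k hk => by rw [hk])

lemma MTendsto.subseq {X : ℕ → Matrix (Fin l) (Fin m) ℝ} {L} (h : MTendsto X L)
    {ψ : ℕ → ℕ} (hψ : StrictMono ψ) : MTendsto (fun k => X (ψ k)) L :=
  fun i j => (h i j).comp hψ.tendsto_atTop

end tend

lemma exists_subseq_tendsto {ι : Type*} [Fintype ι] (x : ℕ → ι → ℝ) (K : ℝ)
    (hb : ∀ k i, |x k i| ≤ K) :
    ∃ (L : ι → ℝ) (φ : ℕ → ℕ), StrictMono φ ∧
      ∀ i, Tendsto (fun k => x (φ k) i) atTop (nhds (L i)) := by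
  classical
  have hcomp : IsCompact (Set.pi Set.univ (fun _ : ι => Set.Icc (-K) K)) :=
    isCompact_univ_pi (fun _ => isCompact_Icc)
  have hmem : ∀ k, x k ∈ Set.pi Set.univ (fun _ : ι => Set.Icc (-K) K) := by
    intro k i _
    exact abs_le.mp (hb k i)
  obtain ⟨L, _, φ, hφ, hL⟩ := hcomp.tendsto_subseq hmem
  exact ⟨L, φ, hφ, fun i => tendsto_pi_nhds.mp hL i⟩

set_option maxHeartbeats 1600000 in
theorem stmt16 (d₁ d₂ r : ℕ) (hd₁ : 2 ≤ d₁) (hd₁₂ : d₁ ≤ d₂) (hr : 1 ≤ r)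
    (ll : Fin r → ℕ) (hll : ∀ j, 2 ≤ ll j ∧ ll j ≤ d₁) (hsum : ∑ j, ll j ≤ d₁)
    (A : Matrix (Fin d₁) (Fin d₂) ℝ) (hA : A ∈ RectRealCollide d₁ d₂ r ll)
    (PL : Matrix (Fin d₁) (Fin d₁) ℝ) (PR : Matrix (Fin d₂) (Fin d₂) ℝ)
    (D : Matrix (Fin d₁) (Fin d₂) ℝ)
    (hPL : PL * PLᵀ = 1 ∧ PLᵀ * PL = 1) (hPR : PR * PRᵀ = 1 ∧ PRᵀ * PR = 1)
    (hD : ∀ i : Fin d₁, ∀ j : Fin d₂, (i : ℕ) ≠ (j : ℕ) → D i j = 0)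
    (hSVD : A = PL * D * PRᵀ)
    (h0 : (0 : ℝ) ∉ spectrum ℝ (A * Aᵀ))
    (hspec : (spectrum ℝ (A * Aᵀ)).ncard = d₁ + r - ∑ j, ll j)
    (ε : ℝ) (hε : 0 < ε) :
    ∃ δ > (0 : ℝ), ∀ B ∈ RectRealCollide d₁ d₂ r ll,
      (∀ i : Fin d₁, ∀ j : Fin d₂, |A i j - B i j| < δ) →
      (0 : ℝ) ∉ spectrum ℝ (B * Bᵀ) ∧
      (spectrum ℝ (B * Bᵀ)).ncard = d₁ + r - ∑ j, ll j ∧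
      ∃ (QL : Matrix (Fin d₁) (Fin d₁) ℝ) (QR : Matrix (Fin d₂) (Fin d₂) ℝ)
        (F : Matrix (Fin d₁) (Fin d₂) ℝ),
        (QL * QLᵀ = 1 ∧ QLᵀ * QL = 1) ∧ (QR * QRᵀ = 1 ∧ QRᵀ * QR = 1) ∧
        (∀ i : Fin d₁, ∀ j : Fin d₂, (i : ℕ) ≠ (j : ℕ) → F i j = 0) ∧
        B = QL * F * QRᵀ ∧
        (∀ i : Fin d₁, |D i (Fin.castLE hd₁₂ i) - F i (Fin.castLE hd₁₂ i)| < ε) ∧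
        (∀ i j : Fin d₁, |QL i j - PL i j| < ε) ∧
        (∀ i j : Fin d₂, |QR i j - PR i j| < ε) := by
  classical
  by_contra hcon
  have key : ∀ δ : ℝ, 0 < δ → ∃ B ∈ RectRealCollide d₁ d₂ r ll,
      (∀ i : Fin d₁, ∀ j : Fin d₂, |A i j - B i j| < δ) ∧
      ¬ ((0 : ℝ) ∉ spectrum ℝ (B * Bᵀ) ∧
        (spectrum ℝ (B * Bᵀ)).ncard = d₁ + r - ∑ j, ll j ∧
        ∃ (QL : Matrix (Fin d₁) (Fin d₁) ℝ) (QR : Matrix (Fin d₂) (Fin d₂) ℝ)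
          (F : Matrix (Fin d₁) (Fin d₂) ℝ),
          (QL * QLᵀ = 1 ∧ QLᵀ * QL = 1) ∧ (QR * QRᵀ = 1 ∧ QRᵀ * QR = 1) ∧
          (∀ i : Fin d₁, ∀ j : Fin d₂, (i : ℕ) ≠ (j : ℕ) → F i j = 0) ∧
          B = QL * F * QRᵀ ∧
          (∀ i : Fin d₁, |D i (Fin.castLE hd₁₂ i) - F i (Fin.castLE hd₁₂ i)| < ε) ∧
          (∀ i j : Fin d₁, |QL i j - PL i j| < ε) ∧
          (∀ i j : Fin d₂, |QR i j - PR i j| < ε)) := by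
    intro δ hδ
    by_contra hk
    push_neg at hk
    exact hcon ⟨δ, hδ, hk⟩
  choose Bf hBmem hBclose hBpost using fun n : ℕ => key (1/(n+1)) (by positivity)
  have hmem' : ∀ n, ∃ s : Fin d₁ → ℝ, (∀ i, 0 ≤ s i) ∧
      (∃ P : Matrix (Fin d₁) (Fin d₁) ℝ, P * Pᵀ = 1 ∧ Pᵀ * P = 1 ∧
        Bf n * (Bf n)ᵀ = P * Matrix.diagonal (fun i => s i ^ 2) * Pᵀ) ∧
      hasCollision ll s := fun n => hBmem n
  choose t ht0 hPex hcol using hmem'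
  choose Q hQ1 hQ2 hBQ using hPex
  -- convergence of B to A
  have hBtend : ∀ i j, Tendsto (fun n => Bf n i j) atTop (nhds (A i j)) := by
    intro i j
    rw [Metric.tendsto_atTop]
    intro η hη
    obtain ⟨N, hN⟩ := exists_nat_gt (1/η)
    refine ⟨N, fun n hn => ?_⟩
    rw [Real.dist_eq, abs_sub_comm]
    have hc : (N : ℝ) ≤ (n : ℝ) := Nat.cast_le.mpr hn
    have h2 : (1:ℝ)/η < (n:ℝ)+1 := by linarith
    rw [div_lt_iff₀ hη] at h2
    calc |A i j - Bf n i j| < 1/((n:ℝ)+1) := hBclose n i j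
      _ ≤ η := by
        rw [div_le_iff₀ (by positivity : (0:ℝ) < (n:ℝ)+1)]
        nlinarith
  -- bounds
  set cb : ℝ := (∑ i, ∑ j, |A i j|) + 1 with hcb
  have hAb : ∀ i j, |A i j| ≤ cb - 1 := by
    intro i j
    have h1 : |A i j| ≤ ∑ j', |A i j'| :=
      Finset.single_le_sum (f := fun j' => |A i j'|) (fun j' _ => abs_nonneg _)
        (Finset.mem_univ j)
    have h2 : (∑ j', |A i j'|) ≤ ∑ i', ∑ j', |A i' j'| :=
      Finset.single_le_sum (f := fun i' => ∑ j', |A i' j'|)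
        (fun i' _ => Finset.sum_nonneg fun j' _ => abs_nonneg _) (Finset.mem_univ i)
    simp only [hcb, add_sub_cancel_right]
    linarith
  have hBb : ∀ n i j, |Bf n i j| ≤ cb := by
    intro n i j
    have h1 := hBclose n i j
    have h2 : (1:ℝ)/((n:ℝ)+1) ≤ 1 := by
      rw [div_le_one (by positivity)]
      simp
    have h3 := hAb i j
    have := abs_sub_abs_le_abs_sub (Bf n i j) (A i j)
    rw [abs_sub_comm] at h1
    linarith
  have htr : ∀ n, (∑ i, t n i ^ 2) = ∑ i, ∑ j, Bf n i j ^ 2 := by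
    intro n
    have h1 : Matrix.trace (Bf n * (Bf n)ᵀ) = ∑ i, ∑ j, Bf n i j ^ 2 := by
      rw [Matrix.trace]
      apply Finset.sum_congr rfl
      intro i _
      rw [Matrix.diag]
      rw [Matrix.mul_apply]
      apply Finset.sum_congr rfl
      intro j _
      rw [Matrix.transpose_apply, sq]
    have h2 : Matrix.trace (Bf n * (Bf n)ᵀ) = ∑ i, t n i ^ 2 := by
      rw [hBQ n, Matrix.trace_mul_cycle, hQ2 n, Matrix.one_mul, Matrix.trace_diagonal]
    rw [← h2, h1]
  set Kt : ℝ := 1 + (d₁ : ℝ) * (d₂ : ℝ) * cb ^ 2 with hKt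
  have hcb0 : 0 ≤ cb := by
    have : (0:ℝ) ≤ ∑ i, ∑ j, |A i j| :=
      Finset.sum_nonneg fun i _ => Finset.sum_nonneg fun j _ => abs_nonneg _
    simp only [hcb]; linarith
  have htb : ∀ n i, |t n i| ≤ Kt := by
    intro n i
    rw [abs_of_nonneg (ht0 n i)]
    have hsum2 : (∑ i, t n i ^ 2) ≤ (d₁ : ℝ) * (d₂ : ℝ) * cb ^ 2 := by
      rw [htr n]
      calc (∑ i, ∑ j, Bf n i j ^ 2) ≤ ∑ _i : Fin d₁, ∑ _j : Fin d₂, cb ^ 2 := by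
            apply Finset.sum_le_sum
            intro i' _
            apply Finset.sum_le_sum
            intro j' _
            have hh := abs_le.mp (hBb n i' j')
            nlinarith [mul_nonneg (by linarith [hh.2] : (0:ℝ) ≤ cb - Bf n i' j')
              (by linarith [hh.1] : (0:ℝ) ≤ cb + Bf n i' j')]
        _ = (d₁ : ℝ) * (d₂ : ℝ) * cb ^ 2 := by
            simp [Finset.sum_const, Finset.card_univ, mul_assoc]
    have hsq : t n i ^ 2 ≤ ∑ i', t n i' ^ 2 :=
      Finset.single_le_sum (f := fun i' => t n i' ^ 2) (fun i' _ => sq_nonneg _)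
        (Finset.mem_univ i)
    rcases le_or_gt (t n i) 1 with h | h
    · have : (0:ℝ) ≤ (d₁ : ℝ) * (d₂ : ℝ) * cb ^ 2 := by positivity
      simp only [hKt]; linarith
    · have h2 : t n i ≤ t n i ^ 2 := by nlinarith
      simp only [hKt]; linarith
  have hQb : ∀ n i j, |Q n i j| ≤ 1 := by
    intro n i j
    have h1 := congrFun (congrFun (hQ1 n) i) i
    rw [Matrix.mul_apply] at h1
    have h2 : (∑ c, Q n i c * (Q n)ᵀ c i) = ∑ c, Q n i c ^ 2 := by
      apply Finset.sum_congr rfl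
      intro c _
      rw [Matrix.transpose_apply, sq]
    rw [h2] at h1
    have h3 : (1 : Matrix (Fin d₁) (Fin d₁) ℝ) i i = 1 := Matrix.one_apply_eq i
    rw [h3] at h1
    have h4 : Q n i j ^ 2 ≤ 1 := by
      rw [← h1]
      exact Finset.single_le_sum (f := fun c => Q n i c ^ 2) (fun c _ => sq_nonneg _)
        (Finset.mem_univ j)
    rw [abs_le]
    constructor <;> nlinarith
  -- first extraction
  set K : ℝ := max 1 Kt with hK
  obtain ⟨Lim, φ, hφ, hconv⟩ := exists_subseq_tendsto
    (fun n => Sum.elim (fun p : Fin d₁ × Fin d₁ => Q n p.1 p.2) (t n)) K (by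
      intro k idx
      rcases idx with p | i
      · exact le_trans (hQb k p.1 p.2) (le_max_left _ _)
      · exact le_trans (htb k i) (le_max_right _ _))
  set Qi : Matrix (Fin d₁) (Fin d₁) ℝ := Matrix.of (fun i j => Lim (Sum.inl (i,j))) with hQidef
  set f : Fin d₁ → ℝ := fun i => Lim (Sum.inr i) with hfdef
  have hQiT : MTendsto (fun k => Q (φ k)) Qi := fun i j => hconv (Sum.inl (i,j))
  have hfT : ∀ i, Tendsto (fun k => t (φ k) i) atTop (nhds (f i)) := fun i => hconv (Sum.inr i)
  have hBT : MTendsto (fun k => Bf (φ k)) A := fun i j => (hBtend i j).comp hφ.tendsto_atTop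
  -- limit identities
  have hQi1 : Qi * Qiᵀ = 1 := by
    refine MTendsto.unique (hQiT.mul hQiT.transpose) ?_
    exact (MTendsto.const 1).congr' (Filter.Eventually.of_forall fun k => (hQ1 (φ k)).symm)
  have hQi2 : Qiᵀ * Qi = 1 := by
    refine MTendsto.unique (hQiT.transpose.mul hQiT) ?_
    exact (MTendsto.const 1).congr' (Filter.Eventually.of_forall fun k => (hQ2 (φ k)).symm)
  have hdiagT : MTendsto (fun k => Matrix.diagonal (fun i => t (φ k) i ^ 2))
      (Matrix.diagonal (fun i => f i ^ 2)) := by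
    intro i j
    by_cases h : i = j
    · subst h
      simp only [Matrix.diagonal_apply_eq]
      exact (hfT i).pow 2
    · simp only [Matrix.diagonal_apply_ne _ h]
      exact tendsto_const_nhds
  have hAAT : A * Aᵀ = Qi * Matrix.diagonal (fun i => f i ^ 2) * Qiᵀ := by
    refine MTendsto.unique (hBT.mul hBT.transpose) ?_
    exact ((hQiT.mul hdiagT).mul hQiT.transpose).congr'
      (Filter.Eventually.of_forall fun k => (hBQ (φ k)).symm)
  have hf0 : ∀ i, 0 ≤ f i := fun i =>
    ge_of_tendsto (hfT i) (Filter.Eventually.of_forall fun k => ht0 (φ k) i)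
  have hspecA : spectrum ℝ (A * Aᵀ) = Set.range (fun i => f i ^ 2) := by
    rw [hAAT, spectrum_conj_diag Qi hQi1 hQi2]
  -- the diagonal of D
  set dD : Fin d₁ → ℝ := fun i => D i (Fin.castLE hd₁₂ i) with hdDdef
  have hDDT : D * Dᵀ = Matrix.diagonal (fun i => dD i ^ 2) := by
    ext i i'
    rw [Matrix.mul_apply]
    by_cases h : i = i'
    · subst h
      rw [Matrix.diagonal_apply_eq]
      rw [Finset.sum_eq_single (Fin.castLE hd₁₂ i)]
      · rw [Matrix.transpose_apply, sq]
      · intro b _ hb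
        have hbv : (i : ℕ) ≠ (b : ℕ) := by
          intro hc
          exact hb (Fin.ext hc.symm)
        rw [hD i b hbv, zero_mul]
      · intro hc
        exact absurd (Finset.mem_univ _) hc
    · rw [Matrix.diagonal_apply_ne _ h]
      apply Finset.sum_eq_zero
      intro b _
      rw [Matrix.transpose_apply]
      by_cases hib : (i : ℕ) = (b : ℕ)
      · have : (i' : ℕ) ≠ (b : ℕ) := by
          intro hc
          exact h (Fin.ext (hib.trans hc.symm))
        rw [hD i' b this, mul_zero]
      · rw [hD i b hib, zero_mul]
  have hAAT2 : A * Aᵀ = PL * Matrix.diagonal (fun i => dD i ^ 2) * PLᵀ := by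
    rw [hSVD]
    have e : (PL * D * PRᵀ) * (PL * D * PRᵀ)ᵀ = PL * (D * ((PRᵀ * PR) * (Dᵀ * PLᵀ))) := by
      rw [Matrix.transpose_mul, Matrix.transpose_mul, Matrix.transpose_transpose]
      simp only [Matrix.mul_assoc]
    rw [e, hPR.2, Matrix.one_mul, ← Matrix.mul_assoc D, hDDT, ← Matrix.mul_assoc]
  have hspecA2 : spectrum ℝ (A * Aᵀ) = Set.range (fun i => dD i ^ 2) := by
    rw [hAAT2, spectrum_conj_diag PL hPL.1 hPL.2]
  have hdD0 : ∀ i, dD i ≠ 0 := by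
    intro i h
    exact h0 (by rw [hspecA2]; exact ⟨i, by show dD i ^ 2 = 0; rw [h]; ring⟩)
  have hfne : ∀ i, f i ≠ 0 := by
    intro i h
    exact h0 (by rw [hspecA]; exact ⟨i, by show f i ^ 2 = 0; rw [h]; ring⟩)
  have hfpos : ∀ i, 0 < f i := fun i => lt_of_le_of_ne (hf0 i) (Ne.symm (hfne i))
  have hrange : Set.range (fun i => f i ^ 2) = Set.range (fun i => dD i ^ 2) := by
    rw [← hspecA, hspecA2]
  have hσex : ∀ j, ∃ i, f i ^ 2 = dD j ^ 2 := by
    intro j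
    have : dD j ^ 2 ∈ Set.range (fun i => dD i ^ 2) := ⟨j, rfl⟩
    rw [← hrange] at this
    exact this
  choose σ hσf using hσex
  have hfσ : ∀ j, f (σ j) = |dD j| := by
    intro j
    refine sq_eq_of_nonneg (hf0 _) (abs_nonneg _) ?_
    rw [hσf j, sq_abs]
  -- the gauge S
  set S : Matrix (Fin d₁) (Fin d₁) ℝ := Qiᵀ * PL with hSdef
  have hSTS : Sᵀ * S = 1 := by
    have e : (Qiᵀ * PL)ᵀ * (Qiᵀ * PL) = PLᵀ * (Qi * Qiᵀ) * PL := by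
      rw [Matrix.transpose_mul, Matrix.transpose_transpose]
      noncomm_ring
    rw [hSdef, e, hQi1, Matrix.mul_one, hPL.2]
  have hSST : S * Sᵀ = 1 := by
    have e : (Qiᵀ * PL) * (Qiᵀ * PL)ᵀ = Qiᵀ * (PL * PLᵀ) * Qi := by
      rw [Matrix.transpose_mul, Matrix.transpose_transpose]
      noncomm_ring
    rw [hSdef, e, hPL.1, Matrix.mul_one, hQi2]
  have hSd : Matrix.diagonal (fun i => f i ^ 2) * S = S * Matrix.diagonal (fun i => dD i ^ 2) := by
    have e1 : Qiᵀ * (Qi * Matrix.diagonal (fun i => f i ^ 2) * Qiᵀ) * PL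
        = (Qiᵀ * Qi) * Matrix.diagonal (fun i => f i ^ 2) * (Qiᵀ * PL) := by noncomm_ring
    have e2 : Qiᵀ * (PL * Matrix.diagonal (fun i => dD i ^ 2) * PLᵀ) * PL
        = (Qiᵀ * PL) * Matrix.diagonal (fun i => dD i ^ 2) * (PLᵀ * PL) := by noncomm_ring
    have := congrArg (fun M => Qiᵀ * M * PL) hAAT.symm
    rw [hAAT2, e1, e2, hQi2, hPL.2, Matrix.one_mul, Matrix.mul_one] at this
    rw [hSdef]
    exact this
  have hS0 : ∀ i j, S i j ≠ 0 → f i ^ 2 = dD j ^ 2 := by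
    intro i j hne
    have h1 := congrFun (congrFun hSd i) j
    rw [Matrix.diagonal_mul, Matrix.mul_diagonal] at h1
    rw [mul_comm (S i j) (dD j ^ 2)] at h1
    exact mul_right_cancel₀ hne h1
  -- cardinality of the image of f
  set X : ℕ := d₁ + r - ∑ j, ll j with hXdef
  have himgf : (Finset.image f Finset.univ).card = X := by
    have h1 : (Set.range (fun i => f i ^ 2)).ncard = X := by
      rw [← hspecA]; exact hspec
    rw [range_eq_coe_image, Set.ncard_coe_finset] at h1
    have h2 : Finset.image (fun i => f i ^ 2) Finset.univ
        = Finset.image (fun x : ℝ => x ^ 2) (Finset.image f Finset.univ) := by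
      rw [Finset.image_image]
      rfl
    rw [h2] at h1
    rw [← Finset.card_image_of_injOn (sq_injOn_nonneg (fun x hx => by
      rw [Finset.mem_image] at hx
      obtain ⟨i, _, hi⟩ := hx
      rw [← hi]; exact hf0 i))]
    exact h1
  -- pigeonhole bound
  have hll1 : ∀ j, 1 ≤ ll j := fun j => le_trans one_le_two (hll j).1
  have hllsum : (∑ j, (ll j - 1)) + r = ∑ j, ll j := by
    have h1 : ∀ j : Fin r, (ll j - 1) + 1 = ll j := fun j => Nat.succ_pred_eq_of_pos (hll1 j)
    calc (∑ j, (ll j - 1)) + r = ∑ j : Fin r, ((ll j - 1) + 1) := by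
          rw [Finset.sum_add_distrib, Finset.sum_const, Finset.card_univ, Fintype.card_fin,
            smul_eq_mul, mul_one]
      _ = ∑ j, ll j := Finset.sum_congr rfl fun j _ => h1 j
  have hpigf : ∀ n, (Finset.image (t n) Finset.univ).card ≤ X := by
    intro n
    have := collision_image_card ll hll1 (hcol n)
    omega
  -- minimal gap of f
  set gs : Finset ℝ := Finset.image (fun p : Fin d₁ × Fin d₁ => |f p.1 - f p.2|)
    ((Finset.univ ×ˢ Finset.univ).filter (fun p => f p.1 ≠ f p.2)) with hgsdef
  set g : ℝ := if h : gs.Nonempty then gs.min' h else 1 with hgdef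
  have hgs_pos : ∀ y ∈ gs, 0 < y := by
    intro y hy
    rw [hgsdef, Finset.mem_image] at hy
    obtain ⟨p, hp, hpe⟩ := hy
    rw [Finset.mem_filter] at hp
    rw [← hpe]
    exact abs_pos.mpr (sub_ne_zero.mpr hp.2)
  have hgpos : 0 < g := by
    rw [hgdef]
    split
    · rename_i h
      exact hgs_pos _ (gs.min'_mem h)
    · norm_num
  have hgle : ∀ i i', f i ≠ f i' → g ≤ |f i - f i'| := by
    intro i i' hne
    have hmem : |f i - f i'| ∈ gs := by
      rw [hgsdef, Finset.mem_image]
      exact ⟨(i, i'), Finset.mem_filter.mpr ⟨Finset.mem_product.mpr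
        ⟨Finset.mem_univ _, Finset.mem_univ _⟩, hne⟩, rfl⟩
    rw [hgdef, dif_pos ⟨_, hmem⟩]
    exact Finset.min'_le _ _ hmem
  -- sign vector
  set sg : Fin d₁ → ℝ := fun j => if dD j < 0 then -1 else 1 with hsgdef
  have hsg2 : ∀ j, sg j * sg j = 1 := by
    intro j
    rw [hsgdef]
    by_cases h : dD j < 0 <;> simp [h]
  have hsgne : ∀ j, sg j ≠ 0 := by
    intro j
    rw [hsgdef]
    by_cases h : dD j < 0 <;> simp [h]
  have hsgd : ∀ j, sg j * |dD j| = dD j := by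
    intro j
    simp only [hsgdef]
    split_ifs with h
    · rw [abs_of_neg h]; ring
    · rw [abs_of_nonneg (not_lt.mp h), one_mul]
  set F1 : ℕ → Matrix (Fin d₁) (Fin d₁) ℝ :=
    fun k => Matrix.diagonal (fun j => sg j * t (φ k) (σ j)) with hF1def
  set F1i : ℕ → Matrix (Fin d₁) (Fin d₁) ℝ :=
    fun k => Matrix.diagonal (fun j => (sg j * t (φ k) (σ j))⁻¹) with hF1idef
  set R1 : ℕ → Matrix (Fin d₂) (Fin d₁) ℝ :=
    fun k => (Bf (φ k))ᵀ * (Q (φ k) * S) * F1i k with hR1def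
  set Good : ℕ → Prop := fun k => ∀ i, |f i - t (φ k) i| < g/3 with hGooddef
  have hGoodEv : ∀ᶠ k in atTop, Good k := by
    rw [hGooddef]
    exact eventually_all.mpr fun i => tendsto_abs_lt (hfT i) (by positivity)
  have i0 : Fin d₁ := ⟨0, by omega⟩
  have hsep : ∀ k, Good k → ∀ i i', f i ≠ f i' → t (φ k) i ≠ t (φ k) i' := by
    intro k hk i i' hne heq
    have h1 := hk i
    have h2 := hk i'
    have h3 := hgle i i' hne
    have h4 : f i - f i' = (f i - t (φ k) i) + (t (φ k) i' - f i') := by rw [heq]; ring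
    have h5 : |f i - f i'| ≤ |f i - t (φ k) i| + |t (φ k) i' - f i'| := by
      rw [h4]; exact abs_add_le _ _
    rw [abs_sub_comm (t (φ k) i') (f i')] at h5
    linarith
  have hrig : ∀ k, Good k → (∀ i i', f i = f i' → t (φ k) i = t (φ k) i')
      ∧ (Finset.image (t (φ k)) Finset.univ).card = X :=
    fun k hk => rigidity i0 f (t (φ k)) himgf (hsep k hk) (hpigf (φ k))
  have hfeq : ∀ i j, f i ^ 2 = dD j ^ 2 → f i = f (σ j) := by
    intro i j h
    refine sq_eq_of_nonneg (hf0 i) (hf0 _) ?_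
    have h2 : f (σ j) ^ 2 = dD j ^ 2 := by simp [hσf j, sq_abs]
    rw [h2]
    exact h
  have hdiagS : ∀ k, Good k →
      Sᵀ * Matrix.diagonal (fun i => t (φ k) i ^ 2) * S
        = Matrix.diagonal (fun j => t (φ k) (σ j) ^ 2) := by
    intro k hk
    ext j j'
    rw [Matrix.mul_apply]
    have h1 : ∀ i, (Sᵀ * Matrix.diagonal (fun i => t (φ k) i ^ 2)) j i * S i j'
        = t (φ k) (σ j) ^ 2 * (S i j * S i j') := by
      intro i
      rw [Matrix.mul_diagonal, Matrix.transpose_apply]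
      by_cases h : S i j = 0
      · rw [h]; ring
      · have hfe : f i = f (σ j) := hfeq i j (hS0 i j h)
        rw [(hrig k hk).1 _ _ hfe]; ring
    rw [Finset.sum_congr rfl (fun i _ => h1 i), ← Finset.mul_sum]
    have h2 : (∑ i, S i j * S i j') = (Sᵀ * S) j j' := by
      rw [Matrix.mul_apply]
      exact Finset.sum_congr rfl fun i _ => by rw [Matrix.transpose_apply]
    rw [h2, hSTS]
    by_cases hjj : j = j'
    · subst hjj
      rw [Matrix.one_apply_eq, Matrix.diagonal_apply_eq, mul_one]
    · rw [Matrix.one_apply_ne hjj, Matrix.diagonal_apply_ne _ hjj, mul_zero]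
  have hQBBQ : ∀ k, Good k →
      (Q (φ k) * S)ᵀ * (Bf (φ k) * (Bf (φ k))ᵀ) * (Q (φ k) * S)
        = Matrix.diagonal (fun j => t (φ k) (σ j) ^ 2) := by
    intro k hk
    rw [hBQ (φ k)]
    have e : (Q (φ k) * S)ᵀ * (Q (φ k) * Matrix.diagonal (fun i => t (φ k) i ^ 2) * (Q (φ k))ᵀ)
          * (Q (φ k) * S)
        = Sᵀ * (((Q (φ k))ᵀ * Q (φ k)) * Matrix.diagonal (fun i => t (φ k) i ^ 2)
          * ((Q (φ k))ᵀ * Q (φ k))) * S := by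
      rw [Matrix.transpose_mul]
      noncomm_ring
    rw [e, hQ2 (φ k), Matrix.one_mul, Matrix.mul_one]
    have e2 : Sᵀ * (Matrix.diagonal (fun i => t (φ k) i ^ 2)) * S
        = Sᵀ * Matrix.diagonal (fun i => t (φ k) i ^ 2) * S := rfl
    rw [e2]
    exact hdiagS k hk
  have hR1orth : ∀ k, Good k → (∀ i, 0 < t (φ k) i) → (R1 k)ᵀ * R1 k = 1 := by
    intro k hk hpos
    have e : (R1 k)ᵀ * R1 k
        = (F1i k)ᵀ * ((Q (φ k) * S)ᵀ * (Bf (φ k) * (Bf (φ k))ᵀ) * (Q (φ k) * S)) * F1i k := by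
      rw [hR1def]
      simp only [Matrix.transpose_mul, Matrix.transpose_transpose, Matrix.mul_assoc]
    rw [e, hQBBQ k hk]
    simp only [hF1idef]
    rw [Matrix.diagonal_transpose]
    ext a b
    by_cases hab : a = b
    · subst hab
      rw [Matrix.mul_diagonal, Matrix.diagonal_mul, Matrix.diagonal_apply_eq,
        Matrix.one_apply_eq]
      have ht := hpos (σ a)
      have ha : sg a * t (φ k) (σ a) ≠ 0 := mul_ne_zero (hsgne a) (ne_of_gt ht)
      have hi : (sg a)⁻¹ = sg a := (eq_inv_of_mul_eq_one_left (hsg2 a)).symm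
      have htt : t (φ k) (σ a) * (t (φ k) (σ a))⁻¹ = 1 := mul_inv_cancel₀ (ne_of_gt ht)
      rw [mul_inv, hi]
      linear_combination ((t (φ k) (σ a) * (t (φ k) (σ a))⁻¹) ^ 2) * hsg2 a
        + (t (φ k) (σ a) * (t (φ k) (σ a))⁻¹ + 1) * htt
    · rw [Matrix.mul_diagonal, Matrix.diagonal_mul, Matrix.diagonal_apply_ne _ hab,
        Matrix.one_apply_ne hab]
      ring
  -- orthogonal completion
  set Useq : ℕ → Matrix (Fin d₂) (Fin d₂) ℝ := fun k =>
    if h : (R1 k)ᵀ * R1 k = 1 then (exists_orth_ext hd₁₂ (R1 k) h).choose else 1 with hUseqdef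
  have hUorth : ∀ k, (Useq k)ᵀ * Useq k = 1 := by
    intro k
    rw [hUseqdef]
    by_cases h : (R1 k)ᵀ * R1 k = 1
    · simp only [dif_pos h]
      exact (exists_orth_ext hd₁₂ (R1 k) h).choose_spec.1
    · simp only [dif_neg h, Matrix.transpose_one, Matrix.mul_one]
  have hUorth2 : ∀ k, Useq k * (Useq k)ᵀ = 1 := fun k => mul_eq_one_comm.mp (hUorth k)
  have hUb : ∀ k i j, |Useq k i j| ≤ 1 := by
    intro k i j
    have h1 := congrFun (congrFun (hUorth k) j) j
    rw [Matrix.mul_apply] at h1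
    have h2 : (∑ c, (Useq k)ᵀ j c * Useq k c j) = ∑ c, Useq k c j ^ 2 := by
      apply Finset.sum_congr rfl
      intro c _
      rw [Matrix.transpose_apply, sq]
    rw [h2, Matrix.one_apply_eq] at h1
    have h4 : Useq k i j ^ 2 ≤ 1 := by
      rw [← h1]
      exact Finset.single_le_sum (f := fun c => Useq k c j ^ 2) (fun c _ => sq_nonneg _)
        (Finset.mem_univ i)
    rw [abs_le]
    constructor <;> nlinarith
  set EM : Matrix (Fin d₂) (Fin d₁) ℝ :=
    Matrix.of (fun k i => if (k : ℕ) = (i : ℕ) then 1 else 0) with hEMdef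
  have hUcols : ∀ k, ((R1 k)ᵀ * R1 k = 1) → Useq k * EM = R1 k := by
    intro k h
    have hch := (exists_orth_ext hd₁₂ (R1 k) h).choose_spec.2
    have hUk : Useq k = (exists_orth_ext hd₁₂ (R1 k) h).choose := by
      rw [hUseqdef]; simp only [dif_pos h]
    ext j i
    rw [Matrix.mul_apply, Finset.sum_eq_single (Fin.castLE hd₁₂ i)]
    · have hem : EM (Fin.castLE hd₁₂ i) i = 1 := by
        rw [hEMdef]
        show (if ((Fin.castLE hd₁₂ i : Fin d₂) : ℕ) = (i : ℕ) then (1:ℝ) else 0) = 1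
        simp
      rw [hem, mul_one, hUk]
      exact hch (Fin.castLE hd₁₂ i) i rfl j
    · intro b _ hb
      have hbv : (b : ℕ) ≠ (i : ℕ) := by
        intro hc
        exact hb (Fin.ext hc)
      rw [hEMdef]
      show Useq k j b * (if (b : ℕ) = (i : ℕ) then (1:ℝ) else 0) = 0
      rw [if_neg hbv, mul_zero]
    · intro hc; exact absurd (Finset.mem_univ _) hc
  -- second extraction
  obtain ⟨Lim2, ψ, hψ, hconv2⟩ := exists_subseq_tendsto
    (fun k => fun p : Fin d₂ × Fin d₂ => Useq k p.1 p.2) 1 (fun k p => hUb k p.1 p.2)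
  set Ui : Matrix (Fin d₂) (Fin d₂) ℝ := Matrix.of (fun i j => Lim2 (i,j)) with hUidef
  have hUT : MTendsto (fun k => Useq (ψ k)) Ui := fun i j => hconv2 (i,j)
  have hUi1 : Uiᵀ * Ui = 1 :=
    MTendsto.unique (hUT.transpose.mul hUT)
      ((MTendsto.const 1).congr' (Filter.Eventually.of_forall fun k => (hUorth (ψ k)).symm))
  have hUi2 : Ui * Uiᵀ = 1 :=
    MTendsto.unique (hUT.mul hUT.transpose)
      ((MTendsto.const 1).congr' (Filter.Eventually.of_forall fun k => (hUorth2 (ψ k)).symm))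
  have hQiS : Qi * S = PL := by
    rw [hSdef, ← Matrix.mul_assoc, hQi1, Matrix.one_mul]
  have hF1lim : ∀ a : Fin d₁,
      Tendsto (fun k => sg a * t (φ (ψ k)) (σ a)) atTop (nhds (dD a)) := by
    intro a
    have h1 : Tendsto (fun k => t (φ (ψ k)) (σ a)) atTop (nhds (f (σ a))) :=
      (hfT (σ a)).comp hψ.tendsto_atTop
    have h2 := h1.const_mul (sg a)
    have hv : sg a * f (σ a) = dD a := by rw [hfσ a]; exact hsgd a
    rw [hv] at h2
    exact h2
  have hF1iT : MTendsto (fun k => F1i (ψ k)) (Matrix.diagonal (fun j => (dD j)⁻¹)) := by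
    intro a b
    by_cases hab : a = b
    · subst hab
      simp only [hF1idef, Matrix.diagonal_apply_eq]
      exact (hF1lim a).inv₀ (hdD0 a)
    · simp only [hF1idef, Matrix.diagonal_apply_ne _ hab]
      exact tendsto_const_nhds
  have hAPLd : Aᵀ * PL * Matrix.diagonal (fun j => (dD j)⁻¹) = PR * EM := by
    have h2 : Aᵀ * PL = PR * Dᵀ := by
      rw [hSVD, Matrix.transpose_mul, Matrix.transpose_mul, Matrix.transpose_transpose]
      calc PRᵀᵀ * (Dᵀ * PLᵀ) * PL = PR * (Dᵀ * (PLᵀ * PL)) := by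
            rw [Matrix.transpose_transpose]; simp only [Matrix.mul_assoc]
        _ = PR * Dᵀ := by rw [hPL.2, Matrix.mul_one]
    have h3 : Dᵀ * Matrix.diagonal (fun j => (dD j)⁻¹) = EM := by
      ext a b
      rw [Matrix.mul_diagonal, Matrix.transpose_apply, hEMdef]
      show D b a * (dD b)⁻¹ = if (a : ℕ) = (b : ℕ) then 1 else 0
      by_cases hab : (a : ℕ) = (b : ℕ)
      · rw [if_pos hab]
        have hac : a = Fin.castLE hd₁₂ b := Fin.ext hab
        rw [hac]
        exact mul_inv_cancel₀ (hdD0 b)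
      · rw [if_neg hab]
        have hbv : (b : ℕ) ≠ (a : ℕ) := fun hc => hab hc.symm
        rw [hD b a hbv, zero_mul]
    rw [h2, Matrix.mul_assoc, h3]
  have hR1T : MTendsto (fun k => R1 (ψ k)) (PR * EM) := by
    have h1 := (((hBT.subseq hψ).transpose).mul
      ((hQiT.subseq hψ).mul (MTendsto.const S))).mul hF1iT
    have h1' : MTendsto (fun k => R1 (ψ k))
        (Aᵀ * (Qi * S) * Matrix.diagonal (fun j => (dD j)⁻¹)) :=
      h1.congr' (Filter.Eventually.of_forall fun k => by rw [hR1def])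
    rw [hQiS, hAPLd] at h1'
    exact h1'
  -- eventual positivity and goodness
  have htposEv : ∀ᶠ k in atTop, ∀ i, 0 < t (φ k) i :=
    eventually_all.mpr fun i => (hfT i).eventually (eventually_gt_nhds (hfpos i))
  have hGEvψ : ∀ᶠ k in atTop, Good (ψ k) ∧ ∀ i, 0 < t (φ (ψ k)) i :=
    hψ.tendsto_atTop.eventually (hGoodEv.and htposEv)
  have hUE : Ui * EM = PR * EM :=
    MTendsto.unique (hUT.mul (MTendsto.const EM))
      (hR1T.congr' (hGEvψ.mono fun k hk =>
        (hUcols (ψ k) (hR1orth (ψ k) hk.1 hk.2)).symm))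
  set T : Matrix (Fin d₂) (Fin d₂) ℝ := Uiᵀ * PR with hTdef
  have hTE : T * EM = EM := by
    rw [hTdef, Matrix.mul_assoc, ← hUE, ← Matrix.mul_assoc, hUi1, Matrix.one_mul]
  have hTT : T * Tᵀ = 1 := by
    have e : (Uiᵀ * PR) * (Uiᵀ * PR)ᵀ = Uiᵀ * (PR * PRᵀ) * Ui := by
      rw [Matrix.transpose_mul, Matrix.transpose_transpose]; noncomm_ring
    rw [hTdef, e, hPR.1, Matrix.mul_one, hUi1]
  have hTT2 : Tᵀ * T = 1 := by
    have e : (Uiᵀ * PR)ᵀ * (Uiᵀ * PR) = PRᵀ * (Ui * Uiᵀ) * PR := by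
      rw [Matrix.transpose_mul, Matrix.transpose_transpose]; noncomm_ring
    rw [hTdef, e, hUi2, Matrix.mul_one, hPR.2]
  have hUiT : Ui * T = PR := by
    rw [hTdef, ← Matrix.mul_assoc, hUi2, Matrix.one_mul]
  have hQLT : MTendsto (fun k => Q (φ (ψ k)) * S) PL := by
    have h1 := (hQiT.subseq hψ).mul (MTendsto.const S)
    rw [hQiS] at h1
    exact h1
  have hQRT : MTendsto (fun k => Useq (ψ k) * T) PR := by
    have h1 := hUT.mul (MTendsto.const T)
    rw [hUiT] at h1
    exact h1
  have evQL : ∀ᶠ k in atTop, ∀ p : Fin d₁ × Fin d₁,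
      |PL p.1 p.2 - (Q (φ (ψ k)) * S) p.1 p.2| < ε :=
    eventually_all.mpr fun p => tendsto_abs_lt (hQLT p.1 p.2) hε
  have evQR : ∀ᶠ k in atTop, ∀ p : Fin d₂ × Fin d₂,
      |PR p.1 p.2 - (Useq (ψ k) * T) p.1 p.2| < ε :=
    eventually_all.mpr fun p => tendsto_abs_lt (hQRT p.1 p.2) hε
  have evF : ∀ᶠ k in atTop, ∀ i : Fin d₁, |dD i - sg i * t (φ (ψ k)) (σ i)| < ε :=
    eventually_all.mpr fun i => tendsto_abs_lt (hF1lim i) hε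
  obtain ⟨k, ⟨hkGood, hkpos⟩, hkQL, hkQR, hkF⟩ :=
    (hGEvψ.and (evQL.and (evQR.and evF))).exists
  -- assemble the contradiction
  apply hBpost (φ (ψ k))
  -- component facts
  have eQQT : (Q (φ (ψ k)) * S) * (Q (φ (ψ k)) * S)ᵀ = 1 := by
    have e : (Q (φ (ψ k)) * S) * (Q (φ (ψ k)) * S)ᵀ
        = Q (φ (ψ k)) * (S * Sᵀ) * (Q (φ (ψ k)))ᵀ := by
      rw [Matrix.transpose_mul]; noncomm_ring
    rw [e, hSST, Matrix.mul_one, hQ1 (φ (ψ k))]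
  have eQTQ : (Q (φ (ψ k)) * S)ᵀ * (Q (φ (ψ k)) * S) = 1 := by
    have e : (Q (φ (ψ k)) * S)ᵀ * (Q (φ (ψ k)) * S)
        = Sᵀ * ((Q (φ (ψ k)))ᵀ * Q (φ (ψ k))) * S := by
      rw [Matrix.transpose_mul]; noncomm_ring
    rw [e, hQ2 (φ (ψ k)), Matrix.mul_one, hSTS]
  have eRRT : (Useq (ψ k) * T) * (Useq (ψ k) * T)ᵀ = 1 := by
    have e : (Useq (ψ k) * T) * (Useq (ψ k) * T)ᵀ
        = Useq (ψ k) * (T * Tᵀ) * (Useq (ψ k))ᵀ := by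
      rw [Matrix.transpose_mul]; noncomm_ring
    rw [e, hTT, Matrix.mul_one, hUorth2 (ψ k)]
  have eRTR : (Useq (ψ k) * T)ᵀ * (Useq (ψ k) * T) = 1 := by
    have e : (Useq (ψ k) * T)ᵀ * (Useq (ψ k) * T)
        = Tᵀ * ((Useq (ψ k))ᵀ * Useq (ψ k)) * T := by
      rw [Matrix.transpose_mul]; noncomm_ring
    rw [e, hUorth (ψ k), Matrix.mul_one, hTT2]
  have hFdiag : ∀ (i : Fin d₁) (j : Fin d₂), (i : ℕ) ≠ (j : ℕ) →
      (F1 (ψ k) * EMᵀ) i j = 0 := by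
    intro i j hij
    simp only [hF1def]
    rw [Matrix.diagonal_mul, Matrix.transpose_apply, hEMdef]
    show _ * (if (j : ℕ) = (i : ℕ) then (1:ℝ) else 0) = 0
    rw [if_neg (fun hc => hij hc.symm), mul_zero]
  have hR1k : (R1 (ψ k))ᵀ * R1 (ψ k) = 1 := hR1orth (ψ k) hkGood hkpos
  have hUEk : Useq (ψ k) * EM = R1 (ψ k) := hUcols (ψ k) hR1k
  have hETT : EMᵀ * Tᵀ = EMᵀ := by rw [← Matrix.transpose_mul, hTE]
  have hF1F1i : F1 (ψ k) * F1i (ψ k) = 1 := by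
    simp only [hF1def, hF1idef]
    ext a b
    by_cases hab : a = b
    · subst hab
      rw [Matrix.mul_diagonal, Matrix.diagonal_apply_eq, Matrix.one_apply_eq]
      exact mul_inv_cancel₀ (mul_ne_zero (hsgne a) (ne_of_gt (hkpos (σ a))))
    · rw [Matrix.mul_diagonal, Matrix.diagonal_apply_ne _ hab, Matrix.one_apply_ne hab,
        zero_mul]
  have hmain : (Q (φ (ψ k)) * S) * (F1 (ψ k) * EMᵀ) * (Useq (ψ k) * T)ᵀ = Bf (φ (ψ k)) := by
    have h1 : (Q (φ (ψ k)) * S) * (F1 (ψ k) * EMᵀ) * (Useq (ψ k) * T)ᵀ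
        = (Q (φ (ψ k)) * S) * (F1 (ψ k) * ((EMᵀ * Tᵀ) * (Useq (ψ k))ᵀ)) := by
      rw [Matrix.transpose_mul]
      simp only [Matrix.mul_assoc]
    rw [h1, hETT]
    have h2 : EMᵀ * (Useq (ψ k))ᵀ = (R1 (ψ k))ᵀ := by
      rw [← Matrix.transpose_mul, hUEk]
    rw [h2]
    have h3 : (R1 (ψ k))ᵀ = F1i (ψ k) * ((Q (φ (ψ k)) * S)ᵀ * Bf (φ (ψ k))) := by
      rw [hR1def]
      simp only [Matrix.transpose_mul, Matrix.transpose_transpose, hF1idef,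
        Matrix.diagonal_transpose, Matrix.mul_assoc]
    rw [h3]
    have h4 : F1 (ψ k) * (F1i (ψ k) * ((Q (φ (ψ k)) * S)ᵀ * Bf (φ (ψ k))))
        = (Q (φ (ψ k)) * S)ᵀ * Bf (φ (ψ k)) := by
      rw [← Matrix.mul_assoc, hF1F1i, Matrix.one_mul]
    rw [h4, ← Matrix.mul_assoc, eQQT, Matrix.one_mul]
  have hc1 : (0 : ℝ) ∉ spectrum ℝ (Bf (φ (ψ k)) * (Bf (φ (ψ k)))ᵀ) := by
    rw [hBQ (φ (ψ k)), spectrum_conj_diag (Q (φ (ψ k))) (hQ1 (φ (ψ k))) (hQ2 (φ (ψ k)))]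
    rintro ⟨i, hi⟩
    have h1 : t (φ (ψ k)) i ^ 2 = 0 := hi
    nlinarith [hkpos i]
  have hc2 : (spectrum ℝ (Bf (φ (ψ k)) * (Bf (φ (ψ k)))ᵀ)).ncard = X := by
    rw [hBQ (φ (ψ k)), spectrum_conj_diag (Q (φ (ψ k))) (hQ1 (φ (ψ k))) (hQ2 (φ (ψ k))),
      range_eq_coe_image, Set.ncard_coe_finset]
    have himg2 : Finset.image (fun i => t (φ (ψ k)) i ^ 2) Finset.univ
        = Finset.image (fun x : ℝ => x ^ 2) (Finset.image (t (φ (ψ k))) Finset.univ) := by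
      rw [Finset.image_image]
      rfl
    rw [himg2, Finset.card_image_of_injOn (sq_injOn_nonneg (fun x hx => by
      rw [Finset.mem_image] at hx
      obtain ⟨i, _, hi⟩ := hx
      rw [← hi]; exact ht0 (φ (ψ k)) i))]
    exact (hrig (ψ k) hkGood).2
  have hFe : ∀ i : Fin d₁,
      |D i (Fin.castLE hd₁₂ i) - (F1 (ψ k) * EMᵀ) i (Fin.castLE hd₁₂ i)| < ε := by
    intro i
    have hent : (F1 (ψ k) * EMᵀ) i (Fin.castLE hd₁₂ i) = sg i * t (φ (ψ k)) (σ i) := by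
      simp only [hF1def]
      rw [Matrix.diagonal_mul, Matrix.transpose_apply, hEMdef]
      show _ * (if ((Fin.castLE hd₁₂ i : Fin d₂) : ℕ) = (i : ℕ) then (1:ℝ) else 0) = _
      simp
    rw [hent]
    exact hkF i
  exact ⟨hc1, hc2, Q (φ (ψ k)) * S, Useq (ψ k) * T, F1 (ψ k) * EMᵀ,
    ⟨eQQT, eQTQ⟩, ⟨eRRT, eRTR⟩, hFdiag, hmain.symm,
    hFe,
    fun i j => by rw [abs_sub_comm]; exact hkQL (i, j),
    fun i j => by rw [abs_sub_comm]; exact hkQR (i, j)⟩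

end
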